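/- arXiv:1409.8064 — 8 statements merged into one kernel-verified Lean document; each statement's English description precedes it below -/
import Mathlib

section
/- Let G be an infinite group and A a subset of G. If A is not small, then A is Δ-large. -/
open Pointwise

/-- The combinatorial derivation `Δ(A) = {g ∈ G : gA ∩ A is infinite}`. -/
def combDeriv {G : Type*} [Group G] (A : Set G) : Set G :=
  {g : G | ((g • A) ∩ A).Infinite}

/-- `A ⊆ G` is large if `FA = G` for some finite `F ⊆ G`. -/
def IsLarge {G : Type*} [Group G] (A : Set G) : Prop :=
  ∃ F : Set G, F.Finite ∧ F * A = Set.univ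

/-- `A ⊆ G` is small if `(G \ A) ∩ L` is large for every large `L ⊆ G`. -/
def IsSmall {G : Type*} [Group G] (A : Set G) : Prop :=
  ∀ L : Set G, IsLarge L → IsLarge ((Set.univ \ A) ∩ L)

/-- Pigeonhole: an infinite set covered by a finite union has an infinite piece. -/
lemma pigeon_infinite {G : Type*} {E : Set G} (hE : E.Finite) {S : Set G} (hS : S.Infinite)
    {t : G → Set G} (hsub : S ⊆ ⋃ f ∈ E, t f) : ∃ f ∈ E, (S ∩ t f).Infinite := by
  by_contra h
  push_neg at h
  apply hS
  have hEq : S = ⋃ f ∈ E, (S ∩ t f) := by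
    ext x
    simp only [Set.mem_iUnion, Set.mem_inter_iff]
    constructor
    · intro hx
      obtain ⟨f, hf, hxf⟩ := by simpa using hsub hx
      exact ⟨f, hf, hx, hxf⟩
    · rintro ⟨f, hf, hx, _⟩; exact hx
  rw [hEq]
  exact Set.Finite.biUnion hE (fun f hf => h f hf)

/-- If `A` is not small, then `A` is Δ-large. -/
theorem not_small_implies_delta_large {G : Type*} [Group G] [Infinite G]
    (A : Set G) (hA : ¬ IsSmall A) : IsLarge (combDeriv A) := by
  -- Unpack non-smallness: a large `L` with `(univ \ A) ∩ L` not large.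
  rw [IsSmall] at hA
  push_neg at hA
  obtain ⟨L, ⟨E, hE, hEL⟩, hB⟩ := hA
  -- Step B: `E * A` is thick.
  have thick : ∀ K : Set G, K.Finite → ∃ x, ∀ k ∈ K, k * x ∈ E * A := by
    intro K hK
    by_contra h
    push_neg at h
    apply hB
    refine ⟨K⁻¹ * E, (hK.inv).mul hE, ?_⟩
    apply Set.eq_univ_of_forall
    intro g
    obtain ⟨k, hk, hkg⟩ := h g
    have hd : k * g ∈ E * L := by rw [hEL]; trivial
    obtain ⟨e, he, l, hl, heq⟩ := hd
    have hlA : l ∉ A := by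
      intro hlA
      exact hkg ⟨e, he, l, hlA, heq⟩
    refine ⟨k⁻¹ * e, ⟨k⁻¹, Set.inv_mem_inv.mpr hk, e, he, rfl⟩, l, ⟨⟨trivial, hlA⟩, hl⟩, ?_⟩
    show k⁻¹ * e * l = g
    have heq' : e * l = k * g := heq
    rw [mul_assoc, heq', ← mul_assoc, inv_mul_cancel, one_mul]
  -- Step C: the thickness witness sets are infinite.
  have thickInf : ∀ K : Set G, K.Finite → {x | ∀ k ∈ K, k * x ∈ E * A}.Infinite := by
    intro K hK
    by_contra hfin
    rw [Set.not_infinite] at hfin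
    have hSfin := hfin
    set S := {x | ∀ k ∈ K, k * x ∈ E * A} with hSdef
    obtain ⟨D, -, hDfin, hDcard⟩ :=
      (Set.infinite_univ (α := G)).exists_subset_ncard_eq (S.ncard + 1)
    obtain ⟨x, hx⟩ := thick (K * D) (hK.mul hDfin)
    have himg : (fun d => d * x) '' D ⊆ S := by
      rintro _ ⟨d, hd, rfl⟩
      intro k hk
      rw [← mul_assoc]
      exact hx (k * d) ⟨k, hk, d, hd, rfl⟩
    have hinj : Function.Injective (fun d : G => d * x) := fun a b hab => by
      simpa using mul_right_cancel hab
    have hle : ((fun d => d * x) '' D).ncard ≤ S.ncard :=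
      Set.ncard_le_ncard himg hSfin
    rw [Set.ncard_image_of_injective D hinj, hDcard] at hle
    omega
  -- Step D: `E * combDeriv A = univ`.
  refine ⟨E, hE, ?_⟩
  apply Set.eq_univ_of_forall
  intro g
  set K : Set G := insert 1 ((fun f => g * f⁻¹) '' E) with hKdef
  have hKfin : K.Finite := (hE.image _).insert 1
  have hS := thickInf K hKfin
  set S := {x | ∀ k ∈ K, k * x ∈ E * A} with hSdef
  have hScov : S ⊆ ⋃ f ∈ E, f • A := by
    intro x hx
    have h1 : (1 : G) * x ∈ E * A := hx 1 (Set.mem_insert 1 _)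
    rw [one_mul] at h1
    obtain ⟨f, hf, a, ha, rfl⟩ := h1
    exact Set.mem_biUnion hf ⟨a, ha, rfl⟩
  obtain ⟨f, hf, hSf⟩ := pigeon_infinite hE hS hScov
  -- Translate by `f⁻¹` to land inside `A`.
  have hT1 : (f⁻¹ • (S ∩ f • A)).Infinite := hSf.smul_set
  set T1 := f⁻¹ • (S ∩ f • A) with hT1def
  have hT1A : T1 ⊆ A := by
    rintro _ ⟨x, ⟨-, a, ha, rfl⟩, rfl⟩
    simpa [smul_eq_mul, ← mul_assoc] using ha
  have hT1g : ∀ y ∈ T1, g * y ∈ E * A := by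
    rintro _ ⟨x, ⟨hxS, -⟩, rfl⟩
    have : (g * f⁻¹) * x ∈ E * A := hxS (g * f⁻¹) (Set.mem_insert_of_mem _ ⟨f, hf, rfl⟩)
    simpa [smul_eq_mul, mul_assoc] using this
  have hT1cov : T1 ⊆ ⋃ f' ∈ E, {a | g * a ∈ f' • A} := by
    intro y hy
    obtain ⟨f', hf', a, ha, heq⟩ := hT1g y hy
    exact Set.mem_biUnion hf' (by exact ⟨a, ha, heq⟩)
  obtain ⟨f', hf', hT2⟩ := pigeon_infinite hE hT1 hT1cov
  set T2 := T1 ∩ {a | g * a ∈ f' • A} with hT2def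
  -- `f'⁻¹ * g` lies in the combinatorial derivation.
  have hd : f'⁻¹ * g ∈ combDeriv A := by
    have hsub : (f'⁻¹ * g) • T2 ⊆ ((f'⁻¹ * g) • A) ∩ A := by
      rintro _ ⟨y, ⟨hyT1, hyg⟩, rfl⟩
      refine ⟨⟨y, hT1A hyT1, rfl⟩, ?_⟩
      obtain ⟨a, ha, heq⟩ := hyg
      have heq' : f' * a = g * y := heq
      have : (f'⁻¹ * g) * y = a := by
        rw [mul_assoc, ← heq', ← mul_assoc, inv_mul_cancel, one_mul]
      simpa [smul_eq_mul, this] using ha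
    exact (hT2.smul_set.mono hsub)
  exact ⟨f', hf', f'⁻¹ * g, hd, by group⟩
end

section
/- Let G be an infinite group, I a proper translation invariant ideal on G, and A a subset of G. If A is not I-small, then A is Δ_I-large. -/
open Pointwise

/-- A family of subsets of `G` is an ideal if it is closed under taking subsets
and finite unions. -/
def IsSetIdeal {G : Type*} (I : Set (Set G)) : Prop :=
  (∀ s t : Set G, s ⊆ t → t ∈ I → s ∈ I) ∧ (∀ s ∈ I, ∀ t ∈ I, s ∪ t ∈ I)

/-- A family of subsets of `G` is translation invariant if it is closed under
left translation. -/
def IsTransInv {G : Type*} [Group G] (I : Set (Set G)) : Prop :=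
  ∀ s ∈ I, ∀ g : G, g • s ∈ I

/-- `A =_I B` iff the symmetric difference `A △ B` belongs to `I`. -/
def IdealEq {G : Type*} (I : Set (Set G)) (A B : Set G) : Prop :=
  symmDiff A B ∈ I

/-- `A` is `I`-large if `FA =_I G` for some finite `F ⊆ G`. -/
def ILarge {G : Type*} [Group G] (I : Set (Set G)) (A : Set G) : Prop :=
  ∃ F : Set G, F.Finite ∧ IdealEq I (F * A) Set.univ

/-- `A` is `I`-small if `(G \ A) ∩ L` is `I`-large for every `I`-large `L ⊆ G`. -/
def ISmall {G : Type*} [Group G] (I : Set (Set G)) (A : Set G) : Prop :=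
  ∀ L : Set G, ILarge I L → ILarge I ((Set.univ \ A) ∩ L)

/-- The combinatorial derivation relative to `I`:
`Δ_I(A) = {g ∈ G : gA ∩ A ∉ I}`. -/
def combDerivI {G : Type*} [Group G] (I : Set (Set G)) (A : Set G) : Set G :=
  {g : G | (g • A) ∩ A ∉ I}

private lemma ideal_biUnion {G α : Type*} {I : Set (Set G)}
    (hun : ∀ s ∈ I, ∀ t ∈ I, s ∪ t ∈ I)
    (hempty : (∅ : Set G) ∈ I) {S : Set α} (hS : S.Finite)
    {f : α → Set G} (hf : ∀ a ∈ S, f a ∈ I) :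
    (⋃ a ∈ S, f a) ∈ I := by
  revert hf
  refine Set.Finite.induction_on (motive := fun S _ => (∀ a ∈ S, f a ∈ I) → (⋃ a ∈ S, f a) ∈ I) S hS (by simpa using hempty) ?_
  intro a s ha hs ih hf
  rw [Set.biUnion_insert]
  exact hun _ (hf a (Set.mem_insert _ _)) _
    (ih fun b hb => hf b (Set.mem_insert_of_mem _ hb))

private lemma ideal_pigeon {G α : Type*} {I : Set (Set G)}
    (hsub : ∀ s t : Set G, s ⊆ t → t ∈ I → s ∈ I)
    (hun : ∀ s ∈ I, ∀ t ∈ I, s ∪ t ∈ I)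
    (hempty : (∅ : Set G) ∈ I) {S : Set α} (hS : S.Finite)
    (f : α → Set G) {Z : Set G} (hZ : Z ∉ I)
    (hcov : Z ⊆ ⋃ a ∈ S, f a) : ∃ a ∈ S, Z ∩ f a ∉ I := by
  by_contra hc
  push_neg at hc
  apply hZ
  refine hsub _ _ (fun x hx => ?_) (ideal_biUnion hun hempty hS hc)
  obtain ⟨_, ⟨a, rfl⟩, _, ⟨ha, rfl⟩, hxa⟩ := hcov hx
  exact Set.mem_biUnion ha ⟨hx, hxa⟩

/-- If `A` is not `I`-small, then `A` is `Δ_I`-large. -/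
theorem not_Ismall_implies_deltaI_large {G : Type*} [Group G] [Infinite G]
    (I : Set (Set G)) (hIdeal : IsSetIdeal I) (hTrans : IsTransInv I)
    (hProper : Set.univ ∉ I) (A : Set G) (hA : ¬ ISmall I A) :
    ILarge I (combDerivI I A) := by
  obtain ⟨hsub, hun⟩ := hIdeal
  rw [ISmall] at hA
  push_neg at hA
  obtain ⟨L, hL, hD⟩ := hA
  obtain ⟨F₁, hF₁fin, hF₁⟩ := hL
  set B : Set G := L ∩ A with hBdef
  have hJ₀ : (Set.univ \ (F₁ * L)) ∈ I := by
    refine hsub _ _ (fun x hx => ?_) hF₁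
    exact Set.mem_symmDiff.2 (Or.inr ⟨hx.1, hx.2⟩)
  have hempty : (∅ : Set G) ∈ I := hsub _ _ (Set.empty_subset _) hJ₀
  -- thickness of F₁ * B
  have star : ∀ H : Set G, H.Finite → (⋂ h ∈ H, h • (F₁ * B)) ∉ I := by
    intro H hH hW
    rcases H.eq_empty_or_nonempty with rfl | _
    · exact hProper (by simpa using hW)
    apply hD
    refine ⟨H * F₁, hH.mul hF₁fin, ?_⟩
    have hN : ((⋂ h ∈ H, h • (F₁ * B)) ∪ ⋃ h ∈ H, h • (Set.univ \ (F₁ * L))) ∈ I :=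
      hun _ hW _ (ideal_biUnion hun hempty hH fun h _ => hTrans _ hJ₀ h)
    refine hsub _ _ (fun x hx => ?_) hN
    rcases Set.mem_symmDiff.1 hx with ⟨_, hxu⟩ | ⟨_, hxs⟩
    · exact absurd (Set.mem_univ x) hxu
    by_cases hxW : x ∈ ⋂ h ∈ H, h • (F₁ * B)
    · exact Set.mem_union_left _ hxW
    have hex : ∃ h ∈ H, x ∉ h • (F₁ * B) := by
      by_contra hc; push_neg at hc; exact hxW (Set.mem_iInter₂.2 hc)
    obtain ⟨h, hh, hxh⟩ := hex
    by_cases hx2 : x ∈ h • (Set.univ \ (F₁ * L))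
    · exact Set.mem_union_right _ (Set.mem_biUnion hh hx2)
    exfalso
    have hx3 : h⁻¹ • x ∈ F₁ * L := by
      by_contra hc
      exact hx2 (Set.mem_smul_set_iff_inv_smul_mem.2 ⟨Set.mem_univ _, hc⟩)
    obtain ⟨f, hf, l, hl, hfl⟩ := hx3
    by_cases hlA : l ∈ A
    · exact hxh (Set.mem_smul_set_iff_inv_smul_mem.2 ⟨f, hf, l, ⟨hl, hlA⟩, hfl⟩)
    · apply hxs
      refine ⟨h * f, Set.mul_mem_mul hh hf, l, ⟨⟨Set.mem_univ _, hlA⟩, hl⟩, ?_⟩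
      have hfl' : f * l = h⁻¹ * x := hfl
      show (h * f) * l = x
      rw [mul_assoc, hfl', mul_inv_cancel_left]
  -- symmetry of Δ
  have hsymm : ∀ d, d ∈ combDerivI I A → d⁻¹ ∈ combDerivI I A := by
    intro d hd hmem
    apply hd
    have h1 := hTrans _ hmem d
    rw [Set.smul_set_inter, smul_inv_smul] at h1
    rwa [Set.inter_comm] at h1
  -- for every g there is f' ∈ F₁ with g * f' ∈ Δ
  have main₁ : ∀ g : G, ∃ f' ∈ F₁, g * f' ∈ combDerivI I A := by
    intro g
    have hHfin : (insert (1:G) ((· * g) '' F₁)).Finite := (hF₁fin.image _).insert 1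
    have hZ := star _ hHfin
    have hZsub : (⋂ h ∈ insert (1:G) ((· * g) '' F₁), h • (F₁ * B)) ⊆ ⋃ f ∈ F₁, f • B := by
      intro x hx
      have hx1 : x ∈ (1 : G) • (F₁ * B) :=
        Set.biInter_subset_of_mem (Set.mem_insert 1 _) hx
      rw [one_smul] at hx1
      obtain ⟨f, hf, b, hb, rfl⟩ := hx1
      refine Set.mem_biUnion hf ?_
      exact ⟨b, hb, rfl⟩
    obtain ⟨f₀, hf₀, hZ₀⟩ := ideal_pigeon hsub hun hempty hF₁fin _ hZ hZsub
    have hZ₀sub : (⋂ h ∈ insert (1:G) ((· * g) '' F₁), h • (F₁ * B)) ∩ f₀ • B ⊆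
        ⋃ f' ∈ F₁, (f₀ * g * f') • B := by
      intro x hx
      have hmemH : (f₀ * g) ∈ insert (1:G) ((· * g) '' F₁) :=
        Set.mem_insert_of_mem _ ⟨f₀, hf₀, rfl⟩
      have hx1 : x ∈ (f₀ * g) • (F₁ * B) :=
        Set.biInter_subset_of_mem hmemH hx.1
      obtain ⟨y, ⟨f', hf', b, hb, rfl⟩, rfl⟩ := hx1
      refine Set.mem_biUnion hf' ?_
      refine ⟨b, hb, ?_⟩
      show (f₀ * g * f') * b = (f₀ * g) * (f' * b)
      rw [mul_assoc]
    obtain ⟨f', hf', hZ₁⟩ := ideal_pigeon hsub hun hempty hF₁fin _ hZ₀ hZ₀sub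
    have h2 : f₀ • B ∩ (f₀ * g * f') • B ∉ I := by
      intro hmem
      refine hZ₁ (hsub _ _ ?_ hmem)
      exact fun x hx => ⟨hx.1.2, hx.2⟩
    have h3 : B ∩ (g * f') • B ∉ I := by
      intro hmem
      apply h2
      have h4 := hTrans _ hmem f₀
      rw [Set.smul_set_inter, smul_smul, ← mul_assoc] at h4
      exact h4
    refine ⟨f', hf', fun hmem => h3 ?_⟩
    refine hsub _ _ (fun x hx => ?_) hmem
    exact ⟨Set.smul_set_mono Set.inter_subset_right hx.2, hx.1.2⟩
  refine ⟨F₁, hF₁fin, ?_⟩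
  have huniv : F₁ * combDerivI I A = Set.univ := by
    apply Set.eq_univ_of_forall
    intro y
    obtain ⟨f', hf', hmem⟩ := main₁ y⁻¹
    have h4 := hsymm _ hmem
    rw [mul_inv_rev, inv_inv] at h4
    have hy : f' * (f'⁻¹ * y) = y := mul_inv_cancel_left f' y
    exact hy ▸ Set.mul_mem_mul hf' h4
  rw [IdealEq, huniv, symmDiff_self]
  simpa using hempty
end

section
/- Let G be an infinite group, I a proper translation invariant ideal on G, A a subset of G, and F a finite subset of G. If FA =_I G, then F·Δ_I(A) = G. -/
open Pointwise

/-- If `FA =_I G` then `F • Δ_I(A) = G`. -/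
theorem mul_combDerivI_eq_univ {G : Type*} [Group G] [Infinite G]
    (I : Set (Set G)) (hIdeal : IsSetIdeal I) (hTrans : IsTransInv I)
    (hProper : Set.univ ∉ I) (A F : Set G) (hF : F.Finite)
    (hFA : IdealEq I (F * A) Set.univ) :
    F * combDerivI I A = Set.univ := by
  obtain ⟨hSub, hUn⟩ := hIdeal
  have hD : symmDiff (F * A) Set.univ ∈ I := hFA
  have hEmpty : (∅ : Set G) ∈ I := hSub ∅ _ (Set.empty_subset _) hD
  -- finite unions
  have hBUnion : ∀ (f : G → Set G) (S : Set G), S.Finite →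
      (∀ s ∈ S, f s ∈ I) → (⋃ s ∈ S, f s) ∈ I := by
    intro f S hS
    refine Set.Finite.induction_on (motive := fun S _ => (∀ s ∈ S, f s ∈ I) → (⋃ s ∈ S, f s) ∈ I) S hS (fun _ => by simpa using hEmpty) ?_
    intro a s _ _ ih h
    rw [Set.biUnion_insert]
    exact hUn _ (h _ (Set.mem_insert _ _)) _
      (ih fun x hx => h x (Set.mem_insert_of_mem _ hx))
  have hFAunion : F * A = ⋃ f ∈ F, f • A := by
    ext x
    simp [Set.mem_mul, Set.mem_smul_set]
  -- univ \ (F*A) ∈ I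
  have hcompl : (Set.univ \ (F * A)) ∈ I :=
    hSub _ _ (fun x hx => Set.mem_symmDiff.2 (Or.inr ⟨hx.1, hx.2⟩)) hD
  -- A ∉ I
  have hA : A ∉ I := by
    intro hAI
    have hFAI : F * A ∈ I := by
      rw [hFAunion]
      exact hBUnion _ F hF fun f _ => hTrans A hAI f
    exact hProper (hSub Set.univ _
      (fun x _ => by
        by_cases h : x ∈ F * A
        · exact Set.mem_union_right _ h
        · exact Set.mem_union_left _ (Set.mem_symmDiff.2 (Or.inr ⟨trivial, h⟩)))
      (hUn _ hD _ hFAI))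
  rw [Set.eq_univ_iff_forall]
  intro g
  -- g • A ∉ I
  have hgA : (g • A) ∉ I := by
    intro h
    have := hTrans _ h g⁻¹
    rw [inv_smul_smul] at this
    exact hA this
  -- g•A ∩ (F*A) ∉ I
  have hkey : (g • A) ∩ (F * A) ∉ I := by
    intro h
    apply hgA
    refine hSub _ _ ?_ (hUn _ h _ hcompl)
    intro x hx
    by_cases hx' : x ∈ F * A
    · exact Or.inl ⟨hx, hx'⟩
    · exact Or.inr ⟨Set.mem_univ x, hx'⟩
  -- find f ∈ F with g•A ∩ f•A ∉ I
  have : ¬ ∀ f ∈ F, (g • A) ∩ (f • A) ∈ I := by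
    intro h
    apply hkey
    have : (g • A) ∩ (F * A) = ⋃ f ∈ F, (g • A) ∩ (f • A) := by
      rw [hFAunion, Set.inter_iUnion₂]
    rw [this]
    exact hBUnion _ F hF h
  push_neg at this
  obtain ⟨f, hfF, hf⟩ := this
  refine Set.mem_mul.2 ⟨f, hfF, f⁻¹ * g, ?_, by group⟩
  intro hmem
  apply hf
  have := hTrans _ hmem f
  rwa [Set.smul_set_inter, smul_smul, mul_inv_cancel_left] at this
end

section
/- Let G be an infinite group and I a proper translation invariant ideal on G. Every I-large subset A of G is Δ_I-large. -/
open Pointwise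

lemma ideal_biUnion_s3 {G α : Type*} {I : Set (Set G)} (hIdeal : IsSetIdeal I)
    (hEmpty : (∅ : Set G) ∈ I) {F : Set α} (hF : F.Finite) (S : α → Set G)
    (hS : ∀ f ∈ F, S f ∈ I) : (⋃ f ∈ F, S f) ∈ I := by
  classical
  have key : ∀ s : Finset α, (∀ f ∈ s, S f ∈ I) → (⋃ f ∈ s, S f) ∈ I := by
    intro s
    induction s using Finset.induction_on with
    | empty => intro _; simpa using hEmpty
    | insert _ _ ha ih =>
      intro h
      rw [Finset.set_biUnion_insert]
      exact hIdeal.2 _ (h _ (Finset.mem_insert_self _ _)) _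
        (ih fun f hf => h f (Finset.mem_insert_of_mem hf))
  have heq : (⋃ f ∈ F, S f) = ⋃ f ∈ hF.toFinset, S f := by
    ext x; simp [hF.mem_toFinset]
  rw [heq]
  exact key _ fun f hf => hS f (hF.mem_toFinset.mp hf)

/-- Every `I`-large set is `Δ_I`-large. -/
theorem Ilarge_implies_deltaI_large {G : Type*} [Group G] [Infinite G]
    (I : Set (Set G)) (hIdeal : IsSetIdeal I) (hTrans : IsTransInv I)
    (hProper : Set.univ ∉ I) (A : Set G) (hA : ILarge I A) :
    ILarge I (combDerivI I A) := by
  obtain ⟨F, hFfin, hFA⟩ := hA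
  have hEmpty : (∅ : Set G) ∈ I := hIdeal.1 _ _ (Set.empty_subset _) hFA
  have hcompl : Set.univ \ (F * A) ∈ I := by
    have : Set.univ \ (F * A) ⊆ symmDiff (F * A) Set.univ := by
      rw [Set.symmDiff_def]; exact Set.subset_union_right
    exact hIdeal.1 _ _ this hFA
  have hFAeq : F * A = ⋃ f ∈ F, f • A := by
    ext x
    simp [Set.mem_mul, Set.mem_smul_set]
  have hAnotI : A ∉ I := by
    intro hAI
    have hFAI : F * A ∈ I := by
      rw [hFAeq]
      exact ideal_biUnion_s3 hIdeal hEmpty hFfin _ (fun f _ => hTrans A hAI f)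
    apply hProper
    have : (Set.univ : Set G) ⊆ (F * A) ∪ (Set.univ \ (F * A)) := by
      intro x _
      by_cases hx : x ∈ F * A
      · exact Or.inl hx
      · exact Or.inr ⟨trivial, hx⟩
    exact hIdeal.1 _ _ this (hIdeal.2 _ hFAI _ hcompl)
  have hmain : F * combDerivI I A = Set.univ := by
    ext g
    simp only [Set.mem_univ, iff_true]
    by_contra hg
    have hgA : g • A ∉ I := by
      intro h
      apply hAnotI
      have := hTrans _ h g⁻¹
      rwa [inv_smul_smul] at this
    apply hgA
    apply hIdeal.1 _ ((⋃ f ∈ F, (g • A ∩ f • A)) ∪ (Set.univ \ (F * A)))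
    · intro x hx
      by_cases hx2 : x ∈ F * A
      · left
        obtain ⟨f, hf, a, ha, rfl⟩ := hx2
        exact Set.mem_biUnion hf ⟨hx, ⟨a, ha, rfl⟩⟩
      · exact Or.inr ⟨trivial, hx2⟩
    · refine hIdeal.2 _ (ideal_biUnion_s3 hIdeal hEmpty hFfin _ fun f hf => ?_) _ hcompl
      have h1 : (f⁻¹ * g) • A ∩ A ∈ I := by
        by_contra h
        exact hg ⟨f, hf, f⁻¹ * g, h, by group⟩
      have h2 := hTrans _ h1 f
      rwa [Set.smul_set_inter, smul_smul, mul_inv_cancel_left] at h2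
  exact ⟨F, hFfin, by
    rw [IdealEq, hmain]
    simpa [symmDiff_self, Set.bot_eq_empty] using hEmpty⟩
end

section
/- Let G be an infinite group, A a subset of G, and F a finite subset of G. If FA = G, then F·Δ(A) = G. In particular, every large subset of G is Δ-large. -/
open Pointwise

/-- If `FA = G` then `F·Δ(A) = G`; in particular `A` is Δ-large. -/
theorem mul_combDeriv_eq_univ {G : Type*} [Group G] [Infinite G]
    (A F : Set G) (hF : F.Finite) (hFA : F * A = Set.univ) :
    F * combDeriv A = Set.univ ∧ IsLarge (combDeriv A) := by
  have hA : A.Infinite := by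
    by_contra h
    rw [Set.not_infinite] at h
    have : (F * A).Finite := hF.mul h
    rw [hFA] at this
    exact Set.infinite_univ this
  have key : F * combDeriv A = Set.univ := by
    ext g
    simp only [Set.mem_univ, iff_true]
    have hgA : (g • A).Infinite := hA.smul_set
    have hex : ∃ f ∈ F, ((g • A) ∩ (f • A)).Infinite := by
      by_contra h
      push_neg at h
      have hfin : (⋃ f ∈ F, (g • A) ∩ (f • A)).Finite :=
        Set.Finite.biUnion hF h
      have hsub : g • A ⊆ ⋃ f ∈ F, (g • A) ∩ (f • A) := by
        intro x hx
        have hx' : x ∈ F * A := by rw [hFA]; trivial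
        obtain ⟨f, hf, a, ha, rfl⟩ := hx'
        exact Set.mem_biUnion hf ⟨hx, ⟨a, ha, rfl⟩⟩
      exact hgA (hfin.subset hsub)
    obtain ⟨f, hf, hinf⟩ := hex
    refine ⟨f, hf, f⁻¹ * g, ?_, by group⟩
    show (((f⁻¹ * g) • A) ∩ A).Infinite
    have heq : f⁻¹ • ((g • A) ∩ (f • A)) = ((f⁻¹ * g) • A) ∩ A := by
      rw [Set.smul_set_inter, smul_smul, smul_smul]
      simp
    rw [← heq]
    exact hinf.smul_set
  exact ⟨key, F, hF, key⟩
end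

section
/- Let G be an infinite group and I* a proper translation invariant ideal on G that is maximal with respect to inclusion among all proper translation invariant ideals on G. Then every subset A of G with A ∉ I* is I*-large; that is, there exist a finite subset F of G and a set J ∈ I* such that FA ∪ J = G. -/
open Pointwise

/-- For a maximal proper translation invariant ideal `I*`, every set not in
`I*` is `I*`-large: there are a finite `F` and `J ∈ I*` with `FA ∪ J = G`. -/
theorem maximal_ideal_not_mem_implies_large {G : Type*} [Group G] [Infinite G]
    (Istar : Set (Set G))
    (hIdeal : IsSetIdeal Istar) (hTrans : IsTransInv Istar)
    (hProper : Set.univ ∉ Istar)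
    (hMax : ∀ J : Set (Set G), (IsSetIdeal J ∧ IsTransInv J ∧ Set.univ ∉ J) →
      Istar ⊆ J → J = Istar)
    (A : Set G) (hA : A ∉ Istar) :
    ILarge Istar A ∧
      ∃ F : Set G, F.Finite ∧ ∃ J ∈ Istar, F * A ∪ J = Set.univ := by

  -- First, `∅ ∈ Istar`.
  have hempty : (∅ : Set G) ∈ Istar := by
    have h := hMax (insert (∅ : Set G) Istar) ?_ (Set.subset_insert _ _)
    · rw [← h]; exact Set.mem_insert _ _
    · refine ⟨⟨?_, ?_⟩, ?_, ?_⟩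
      · rintro s t hst (rfl | ht)
        · exact Or.inl (Set.subset_empty_iff.mp hst)
        · exact Or.inr (hIdeal.1 s t hst ht)
      · rintro s (rfl | hs) t (rfl | ht)
        · exact Or.inl (by simp)
        · exact Or.inr (by simpa using ht)
        · exact Or.inr (by simpa using hs)
        · exact Or.inr (hIdeal.2 s hs t ht)
      · rintro s (rfl | hs) g
        · exact Or.inl (by simp)
        · exact Or.inr (hTrans s hs g)
      · rintro (h | h)
        · exact (Set.empty_ne_univ h.symm).elim
        · exact hProper h
  -- The key existence statement.
  have key : ∃ F : Set G, F.Finite ∧ ∃ J ∈ Istar, F * A ∪ J = Set.univ := by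
    by_contra hcon
    push_neg at hcon
    set I' : Set (Set G) := {S | ∃ F : Set G, F.Finite ∧ ∃ J ∈ Istar, S ⊆ F * A ∪ J} with hI'
    have hI'eq : I' = Istar := by
      apply hMax
      · refine ⟨⟨?_, ?_⟩, ?_, ?_⟩
        · rintro s t hst ⟨F, hF, J, hJ, hsub⟩
          exact ⟨F, hF, J, hJ, hst.trans hsub⟩
        · rintro s ⟨F1, hF1, J1, hJ1, hs1⟩ t ⟨F2, hF2, J2, hJ2, hs2⟩
          refine ⟨F1 ∪ F2, hF1.union hF2, J1 ∪ J2, hIdeal.2 _ hJ1 _ hJ2, ?_⟩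
          rw [Set.union_mul]
          intro x hx
          rcases hx with hx | hx
          · rcases hs1 hx with h | h
            · exact Or.inl (Or.inl h)
            · exact Or.inr (Or.inl h)
          · rcases hs2 hx with h | h
            · exact Or.inl (Or.inr h)
            · exact Or.inr (Or.inr h)
        · rintro s ⟨F, hF, J, hJ, hs⟩ g
          refine ⟨g • F, hF.smul_set, g • J, hTrans J hJ g, ?_⟩
          have := Set.smul_set_mono (a := g) hs
          rwa [Set.smul_set_union, ← smul_mul_assoc] at this
        · rintro ⟨F, hF, J, hJ, hs⟩
          exact hcon F hF J hJ (Set.eq_univ_of_univ_subset hs)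
      · intro s hs
        exact ⟨∅, Set.finite_empty, s, hs, by simp⟩
    have : A ∈ I' := ⟨(1 : Set G), Set.finite_one, ∅, hempty, by simp⟩
    rw [hI'eq] at this
    exact hA this
  refine ⟨?_, key⟩
  obtain ⟨F, hF, J, hJ, hEq⟩ := key
  refine ⟨F, hF, ?_⟩
  unfold IdealEq
  have hsub : symmDiff (F * A) Set.univ ⊆ J := by
    intro x hx
    rw [Set.symmDiff_def] at hx
    rcases hx with hx | hx
    · exact absurd hx.2 (by simp)
    · have : x ∈ F * A ∪ J := hEq ▸ Set.mem_univ x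
      rcases this with h | h
      · exact absurd h hx.2
      · exact h
  exact hIdeal.1 _ _ hsub hJ
end

section
/- Let G be an infinite group and I* a proper translation invariant ideal on G that is maximal with respect to inclusion among all proper translation invariant ideals on G. Then every I*-small subset of G belongs to I*; consequently the power set of G is partitioned into I* and the family of I*-large sets. -/
open Pointwise

/-- For a maximal proper translation invariant ideal `I*`, every `I*`-small
set belongs to `I*`, and the power set of `G` is partitioned into `I*` and the
family of `I*`-large sets. -/
theorem maximal_ideal_small_mem_and_partition {G : Type*} [Group G] [Infinite G]
    (Istar : Set (Set G))
    (hIdeal : IsSetIdeal Istar) (hTrans : IsTransInv Istar)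
    (hProper : Set.univ ∉ Istar)
    (hMax : ∀ J : Set (Set G), (IsSetIdeal J ∧ IsTransInv J ∧ Set.univ ∉ J) →
      Istar ⊆ J → J = Istar) :
    (∀ A : Set G, ISmall Istar A → A ∈ Istar) ∧
      (∀ A : Set G, A ∈ Istar ↔ ¬ ILarge Istar A) := by

  obtain ⟨hSub, hUnion⟩ := hIdeal
  -- the empty set belongs to `Istar`
  have hEmpty : (∅ : Set G) ∈ Istar := by
    have hJ : insert (∅ : Set G) Istar = Istar := by
      apply hMax
      · refine ⟨⟨?_, ?_⟩, ?_, ?_⟩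
        · rintro s t hst (rfl | ht)
          · left; exact Set.subset_empty_iff.mp hst
          · right; exact hSub s t hst ht
        · rintro s (rfl | hs) t (rfl | ht)
          · left; simp
          · right; simpa using ht
          · right; simpa using hs
          · right; exact hUnion s hs t ht
        · rintro s (rfl | hs) g
          · left; simp
          · right; exact hTrans s hs g
        · rintro (h | h)
          · exact (Set.univ_nonempty (α := G)).ne_empty h
          · exact hProper h
      · exact Set.subset_insert _ _
    rw [← hJ]; exact Set.mem_insert _ _
  -- finite products of translates of members of `Istar` are in `Istar`
  have hFinMul : ∀ (F A : Set G), F.Finite → A ∈ Istar → F * A ∈ Istar := by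
    intro F A hF hA
    refine Set.Finite.induction_on (motive := fun F _ => F * A ∈ Istar) F hF
      (by simpa [Set.empty_mul] using hEmpty) ?_
    intro a s _ _ ih
    have : insert a s * A = a • A ∪ s * A := by
      rw [Set.insert_eq, Set.union_mul, Set.singleton_mul]; rfl
    rw [this]
    exact hUnion _ (hTrans A hA a) _ ih
  -- a member of `Istar` cannot be `Istar`-large
  have hNotLarge : ∀ A : Set G, A ∈ Istar → ¬ ILarge Istar A := by
    intro A hA ⟨F, hF, hEq⟩
    have h1 : F * A ∈ Istar := hFinMul F A hF hA
    have h2 : Set.univ \ (F * A) ∈ Istar := by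
      refine hSub _ _ ?_ hEq
      rw [Set.symmDiff_def]
      exact Set.subset_union_right
    have : (Set.univ : Set G) ∈ Istar := by
      have := hUnion _ h2 _ h1
      rwa [Set.diff_union_of_subset (Set.subset_univ _)] at this
    exact hProper this
  -- a set not in `Istar` is `Istar`-large
  have hLarge : ∀ A : Set G, A ∉ Istar → ILarge Istar A := by
    intro A hA
    by_contra hNL
    set J : Set (Set G) :=
      {S | ∃ F : Set G, F.Finite ∧ ∃ I ∈ Istar, S ⊆ F * A ∪ I} with hJdef
    have hJ : J = Istar := by
      apply hMax
      · refine ⟨⟨?_, ?_⟩, ?_, ?_⟩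
        · rintro s t hst ⟨F, hF, I, hI, htsub⟩
          exact ⟨F, hF, I, hI, hst.trans htsub⟩
        · rintro s ⟨F1, hF1, I1, hI1, hs⟩ t ⟨F2, hF2, I2, hI2, ht⟩
          refine ⟨F1 ∪ F2, hF1.union hF2, I1 ∪ I2, hUnion _ hI1 _ hI2, ?_⟩
          rw [Set.union_mul]
          intro x hx
          rcases hx with hx | hx
          · rcases hs hx with h | h
            · exact Or.inl (Or.inl h)
            · exact Or.inr (Or.inl h)
          · rcases ht hx with h | h
            · exact Or.inl (Or.inr h)
            · exact Or.inr (Or.inr h)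
        · rintro s ⟨F, hF, I, hI, hs⟩ g
          refine ⟨g • F, hF.smul_set, g • I, hTrans I hI g, ?_⟩
          have : g • (F * A ∪ I) = (g • F) * A ∪ g • I := by
            rw [Set.smul_set_union, smul_mul_assoc]
          rw [← this]
          exact Set.smul_set_mono hs
        · rintro ⟨F, hF, I, hI, hU⟩
          apply hNL
          refine ⟨F, hF, ?_⟩
          unfold IdealEq
          refine hSub _ I ?_ hI
          rw [Set.symmDiff_def]
          rintro x (⟨hx, hxu⟩ | ⟨hxu, hx⟩)
          · exact absurd (Set.mem_univ x) hxu
          · rcases hU (Set.mem_univ x) with h | h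
            · exact absurd h hx
            · exact h
      · intro I hI
        exact ⟨∅, Set.finite_empty, I, hI, by simp⟩
    apply hA
    rw [← hJ]
    exact ⟨{1}, Set.finite_singleton 1, ∅, hEmpty, by simp⟩
  have hIff : ∀ A : Set G, A ∈ Istar ↔ ¬ ILarge Istar A := by
    intro A
    constructor
    · exact hNotLarge A
    · intro h
      by_contra hA
      exact h (hLarge A hA)
  refine ⟨?_, hIff⟩
  intro A hA
  by_contra hmem
  have hAL : ILarge Istar A := hLarge A hmem
  have := hA A hAL
  have hempty : (Set.univ \ A) ∩ A = ∅ := by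
    ext x; simp [Set.mem_diff]
  rw [hempty] at this
  obtain ⟨F, hF, hEq⟩ := this
  have : symmDiff (F * (∅ : Set G)) Set.univ = Set.univ := by
    rw [Set.mul_empty, Set.symmDiff_def]; simp
  unfold IdealEq at hEq
  rw [this] at hEq
  exact hProper hEq
end

section
/- Let G be an infinite group and I a proper translation invariant ideal on G. For every decomposition G = A₁ ∪ … ∪ Aₙ of G into n subsets, there exist an index i and a subset F of G with |F| ≤ 2^(2^(n-1) - 1) such that F·Δ_I(Aᵢ) = G. -/
open Pointwise

section Aux

variable {G : Type*} [Group G] {I : Set (Set G)}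

private lemma transInv_iff (hT : IsTransInv I) (g : G) (s : Set G) :
    g • s ∈ I ↔ s ∈ I := by
  constructor
  · intro h
    have := hT _ h g⁻¹
    simpa [inv_smul_smul] using this
  · intro h; exact hT s h g

private lemma ideal_biUnion_s11 (hI : IsSetIdeal I) (hE : (∅ : Set G) ∈ I)
    {α : Type*} [DecidableEq α] (U : Finset α) (f : α → Set G)
    (h : ∀ u ∈ U, f u ∈ I) : (⋃ u ∈ U, f u) ∈ I := by
  induction U using Finset.induction_on with
  | empty => simpa using hE
  | @insert a V ha ih =>
    rw [Finset.set_biUnion_insert]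
    exact hI.2 _ (h a (Finset.mem_insert_self a V)) _
      (ih fun u hu => h u (Finset.mem_insert_of_mem hu))

private lemma coe_mul_eq_biUnion (U : Finset G) (A : Set G) :
    (↑U : Set G) * A = ⋃ u ∈ U, u • A := by
  ext x
  constructor
  · rintro ⟨w, hw, a, ha, rfl⟩
    exact Set.mem_iUnion₂.mpr ⟨w, hw, ⟨a, ha, rfl⟩⟩
  · intro hx
    obtain ⟨u, hu, y, hy, rfl⟩ := Set.mem_iUnion₂.mp hx
    exact ⟨u, hu, y, hy, rfl⟩

private lemma mem_deltaI_inv (hT : IsTransInv I) {A : Set G} {g : G}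
    (h : g ∈ combDerivI I A) : g⁻¹ ∈ combDerivI I A := by
  simp only [combDerivI, Set.mem_setOf_eq] at h ⊢
  intro hc
  apply h
  have h2 := hT _ hc g
  rwa [Set.smul_set_inter, smul_inv_smul, Set.inter_comm] at h2

private lemma lemmaA (hI : IsSetIdeal I) (hT : IsTransInv I)
    (hProper : Set.univ ∉ I) (hE : (∅ : Set G) ∈ I) (U : Finset G) (A : Set G)
    (hcov : Set.univ \ ((↑U : Set G) * A) ∈ I) :
    (↑U : Set G) * combDerivI I A = Set.univ := by
  classical
  have hUA : (↑U : Set G) * A = ⋃ u ∈ U, u • A := coe_mul_eq_biUnion U A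
  have hAnotI : A ∉ I := by
    intro hA
    apply hProper
    have h1 : (↑U : Set G) * A ∈ I := by
      rw [hUA]; exact ideal_biUnion_s11 hI hE U _ fun u _ => hT A hA u
    have hsub : (Set.univ : Set G) ⊆
        (Set.univ \ ((↑U : Set G) * A)) ∪ ((↑U : Set G) * A) := by
      intro x _
      by_cases hx : x ∈ (↑U : Set G) * A
      · exact Or.inr hx
      · exact Or.inl ⟨trivial, hx⟩
    exact hI.1 _ _ hsub (hI.2 _ hcov _ h1)
  apply Set.eq_univ_of_forall
  intro g
  have hgA : g • A ∉ I := fun hc => hAnotI ((transInv_iff hT g A).1 hc)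
  have hmeet : (g • A) ∩ ((↑U : Set G) * A) ∉ I := by
    intro hc
    apply hgA
    have hsub : g • A ⊆ ((g • A) ∩ ((↑U : Set G) * A)) ∪
        (Set.univ \ ((↑U : Set G) * A)) := by
      intro x hx
      by_cases hx2 : x ∈ (↑U : Set G) * A
      · exact Or.inl ⟨hx, hx2⟩
      · exact Or.inr ⟨trivial, hx2⟩
    exact hI.1 _ _ hsub (hI.2 _ hc _ hcov)
  have hex : ∃ u ∈ U, (g • A) ∩ (u • A) ∉ I := by
    by_contra hall
    push_neg at hall
    apply hmeet
    have heq : (g • A) ∩ ((↑U : Set G) * A) = ⋃ u ∈ U, ((g • A) ∩ (u • A)) := by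
      rw [hUA, Set.inter_iUnion₂]
    rw [heq]
    exact ideal_biUnion_s11 hI hE U _ hall
  obtain ⟨u, hu, hint⟩ := hex
  have hmem : u⁻¹ * g ∈ combDerivI I A := by
    simp only [combDerivI, Set.mem_setOf_eq]
    intro hc
    apply hint
    have h2 := hT _ hc u
    rw [Set.smul_set_inter, smul_smul, mul_inv_cancel_left] at h2
    exact h2
  exact ⟨u, hu, u⁻¹ * g, hmem, mul_inv_cancel_left u g⟩

private lemma le_iter (c : ℕ) : ∀ m : ℕ, c ≤ (fun x => x + x * x)^[m] c := by
  intro m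
  induction m with
  | zero => simp
  | succ m ih =>
    rw [Function.iterate_succ_apply']
    exact ih.trans (Nat.le_add_right _ _)

private lemma iter_bound : ∀ k : ℕ, (fun x : ℕ => x + x * x)^[k] 1 ≤ 2 ^ (2 ^ k - 1) := by
  intro k
  induction k with
  | zero => simp
  | succ k ih =>
    rw [Function.iterate_succ_apply']
    set t := (fun x : ℕ => x + x * x)^[k] 1 with ht
    set a := (2 : ℕ) ^ (2 ^ k - 1) with ha
    have h1 : 1 ≤ 2 ^ k := Nat.one_le_two_pow
    have hapos : 0 < a := pow_pos (by norm_num) _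
    have key : (2 : ℕ) ^ (2 ^ (k + 1) - 1) = 2 * (a * a) := by
      rw [ha, show 2 ^ (k + 1) - 1 = (2 ^ k - 1) + (2 ^ k - 1) + 1 by
        rw [pow_succ]; omega]
      rw [pow_add, pow_add, pow_one]
      ring
    calc t + t * t ≤ a + a * a := Nat.add_le_add ih (Nat.mul_le_mul ih ih)
      _ ≤ a * a + a * a := Nat.add_le_add_right (Nat.le_mul_of_pos_left a hapos) _
      _ = 2 * (a * a) := by ring
      _ = 2 ^ (2 ^ (k + 1) - 1) := key.symm

private lemma mainLemma (hI : IsSetIdeal I) (hT : IsTransInv I)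
    (hProper : Set.univ ∉ I) (hE : (∅ : Set G) ∈ I) {n : ℕ} (A : Fin n → Set G) :
    ∀ (m : ℕ) (S : Finset (Fin n)), S.card = m + 1 →
      ∀ (U : Fin n → Finset G) (c : ℕ), (∀ i ∈ S, (U i).card ≤ c) →
      (Set.univ \ ⋃ i ∈ S, (↑(U i) : Set G) * A i) ∈ I →
      ∃ (i : Fin n) (F : Finset G),
        F.card ≤ (fun x => x + x * x)^[m] c ∧
        (↑F : Set G) * combDerivI I (A i) = Set.univ := by
  intro m
  induction m with
  | zero =>
    intro S hS U c hU hcov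
    obtain ⟨j, rfl⟩ := Finset.card_eq_one.mp hS
    refine ⟨j, U j, by simpa using hU j (Finset.mem_singleton_self j), ?_⟩
    apply lemmaA hI hT hProper hE
    simpa using hcov
  | succ m ih =>
    intro S hS U c hU hcov
    classical
    have hScard : 0 < S.card := by omega
    obtain ⟨j, hj⟩ := Finset.card_pos.mp hScard
    by_cases hsep : ∀ u ∈ U j, ∃ g : G, ∀ v ∈ U j,
        ((u⁻¹ * g * v) • A j) ∩ A j ∈ I
    · -- merge case
      choose! gg hgg using hsep
      set T : Finset G := (U j).image gg with hTdef
      set U' : Fin n → Finset G := fun i => U i ∪ T * U i with hU'def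
      set S' : Finset (Fin n) := S.erase j with hS'def
      have hS'card : S'.card = m + 1 := by
        rw [hS'def, Finset.card_erase_of_mem hj, hS]
        omega
      have hsubU' : ∀ i, (↑(U i) : Set G) * A i ⊆ (↑(U' i) : Set G) * A i := by
        intro i x hx
        obtain ⟨w, hw, a, haa, rfl⟩ := hx
        exact ⟨w, Finset.mem_coe.mpr
          (Finset.mem_union_left _ (Finset.mem_coe.mp hw)), a, haa, rfl⟩
      have hU'card : ∀ i ∈ S', (U' i).card ≤ c + c * c := by
        intro i hi
        have h1 : (U' i).card ≤ (U i).card + (T * U i).card :=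
          Finset.card_union_le _ _
        have h2 : (T * U i).card ≤ T.card * (U i).card := Finset.card_mul_le
        have h3 : T.card ≤ (U j).card := Finset.card_image_le
        have hUi : (U i).card ≤ c := hU i (Finset.mem_of_mem_erase hi)
        have hUj : (U j).card ≤ c := hU j hj
        have h4 : T.card * (U i).card ≤ c * c :=
          Nat.mul_le_mul (h3.trans hUj) hUi
        omega
      have hinner : ∀ u ∈ U j,
          ((u • A j) ∩ (gg u • ((↑(U j) : Set G) * A j))) ∈ I := by
        intro u hu
        have hsub2 : (u • A j) ∩ (gg u • ((↑(U j) : Set G) * A j)) ⊆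
            ⋃ v ∈ U j, ((u • A j) ∩ ((gg u * v) • A j)) := by
          rintro x ⟨hx1, hx2⟩
          obtain ⟨z, hz, rfl⟩ := hx2
          obtain ⟨w, hw, a, haa, rfl⟩ := Set.mem_mul.mp hz
          refine Set.mem_iUnion₂.mpr ⟨w, Finset.mem_coe.mp hw, hx1, ?_⟩
          exact ⟨a, haa, (smul_smul (gg u) w a).symm⟩
        have hun : (⋃ v ∈ U j, ((u • A j) ∩ ((gg u * v) • A j))) ∈ I := by
          apply ideal_biUnion_s11 hI hE
          intro v hv
          have h0 := hgg u hu v hv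
          have h1 := hT _ h0 u
          rw [Set.smul_set_inter, smul_smul] at h1
          have h2 : u * (u⁻¹ * gg u * v) = gg u * v := by group
          rw [h2, Set.inter_comm] at h1
          exact h1
        exact hI.1 _ _ hsub2 hun
      have hR : (Set.univ \ ⋃ i ∈ S', (↑(U' i) : Set G) * A i) ⊆
          (Set.univ \ ⋃ i ∈ S, (↑(U i) : Set G) * A i) ∪
          ⋃ u ∈ U j, (((u • A j) ∩ (gg u • ((↑(U j) : Set G) * A j))) ∪
            gg u • (Set.univ \ ⋃ i ∈ S, (↑(U i) : Set G) * A i)) := by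
        rintro x ⟨-, hxn⟩
        by_cases hxJ : x ∈ Set.univ \ ⋃ i ∈ S, (↑(U i) : Set G) * A i
        · exact Or.inl hxJ
        · have hxcov : x ∈ ⋃ i ∈ S, (↑(U i) : Set G) * A i := by
            by_contra hc
            exact hxJ ⟨trivial, hc⟩
          obtain ⟨i, hi, hxi⟩ := Set.mem_iUnion₂.mp hxcov
          have hij : i = j := by
            by_contra hne
            exact hxn (Set.mem_iUnion₂.mpr
              ⟨i, Finset.mem_erase.mpr ⟨hne, hi⟩, hsubU' i hxi⟩)
          rw [hij] at hxi
          rw [coe_mul_eq_biUnion] at hxi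
          obtain ⟨u, hu, hxu⟩ := Set.mem_iUnion₂.mp hxi
          right
          refine Set.mem_iUnion₂.mpr ⟨u, hu, ?_⟩
          by_cases hxg : x ∈ gg u • (Set.univ \ ⋃ i ∈ S, (↑(U i) : Set G) * A i)
          · exact Or.inr hxg
          · left
            refine ⟨hxu, ?_⟩
            have hxall : x ∈ gg u • ((Set.univ \ ⋃ i ∈ S, (↑(U i) : Set G) * A i)
                ∪ (⋃ i ∈ S, (↑(U i) : Set G) * A i)) := by
              have hsplit : (Set.univ \ ⋃ i ∈ S, (↑(U i) : Set G) * A i)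
                  ∪ (⋃ i ∈ S, (↑(U i) : Set G) * A i) = Set.univ := by
                rw [Set.diff_union_self, Set.univ_union]
              rw [hsplit, Set.smul_set_univ]
              trivial
            rw [Set.smul_set_union] at hxall
            rcases hxall with h | h
            · exact absurd h hxg
            · obtain ⟨z, hz, rfl⟩ := h
              obtain ⟨i', hi', hzi'⟩ := Set.mem_iUnion₂.mp hz
              by_cases hi'j : i' = j
              · subst hi'j
                exact ⟨z, hzi', rfl⟩
              · exfalso
                apply hxn
                refine Set.mem_iUnion₂.mpr
                  ⟨i', Finset.mem_erase.mpr ⟨hi'j, hi'⟩, ?_⟩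
                obtain ⟨w, hw, a, haa, rfl⟩ := Set.mem_mul.mp hzi'
                refine ⟨gg u * w, ?_, a, haa, ?_⟩
                · have hgT : gg u ∈ T := Finset.mem_image_of_mem gg hu
                  exact Finset.mem_coe.mpr (Finset.mem_union_right _
                    (Finset.mul_mem_mul hgT (Finset.mem_coe.mp hw)))
                · exact (smul_smul (gg u) w a).symm
      have hcov' : (Set.univ \ ⋃ i ∈ S', (↑(U' i) : Set G) * A i) ∈ I := by
        refine hI.1 _ _ hR (hI.2 _ hcov _ ?_)
        apply ideal_biUnion_s11 hI hE
        intro u hu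
        exact hI.2 _ (hinner u hu) _ (hT _ hcov (gg u))
      obtain ⟨i, F, hF, heq⟩ := ih S' hS'card U' (c + c * c) hU'card hcov'
      refine ⟨i, F, ?_, heq⟩
      rw [Function.iterate_succ_apply]
      exact hF
    · -- termination case
      push_neg at hsep
      obtain ⟨u, hu, hterm⟩ := hsep
      refine ⟨j, U j, (hU j hj).trans (le_iter c (m + 1)), ?_⟩
      apply Set.eq_univ_of_forall
      intro y
      obtain ⟨v, hv, hvI⟩ := hterm (u * y⁻¹)
      have hsimp : u⁻¹ * (u * y⁻¹) * v = y⁻¹ * v := by group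
      rw [hsimp] at hvI
      have h1 : y⁻¹ * v ∈ combDerivI I (A j) := hvI
      have h2 := mem_deltaI_inv hT h1
      rw [mul_inv_rev, inv_inv] at h2
      exact ⟨v, hv, v⁻¹ * y, h2, mul_inv_cancel_left v y⟩

end Aux

/-- Given a decomposition `G = A₁ ∪ … ∪ Aₙ`, there exist `i` and `F` with
`|F| ≤ 2^(2^(n-1) - 1)` and `F·Δ_I(Aᵢ) = G`. -/
theorem decomposition_deltaI {G : Type*} [Group G] [Infinite G]
    (I : Set (Set G)) (hIdeal : IsSetIdeal I) (hTrans : IsTransInv I)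
    (hProper : Set.univ ∉ I) (n : ℕ) (A : Fin n → Set G)
    (hcover : (⋃ i, A i) = Set.univ) :
    ∃ (i : Fin n) (F : Finset G), F.card ≤ 2 ^ (2 ^ (n - 1) - 1) ∧
      (F : Set G) * combDerivI I (A i) = Set.univ := by
  classical
  have hn : n ≠ 0 := by
    intro h
    subst h
    have h0 : (⋃ i : Fin 0, A i) = (∅ : Set G) := Set.iUnion_of_empty A
    rw [hcover] at h0
    obtain ⟨g⟩ := (inferInstance : Nonempty G)
    exact absurd (h0 ▸ (Set.mem_univ g)) (Set.notMem_empty g)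
  obtain ⟨k, rfl⟩ : ∃ k, n = k + 1 := ⟨n - 1, by omega⟩
  by_cases hE : (∅ : Set G) ∈ I
  · have hcovU : (⋃ i ∈ (Finset.univ : Finset (Fin (k + 1))),
        (↑({1} : Finset G) : Set G) * A i) = Set.univ := by
      rw [← hcover]
      apply Set.eq_of_subset_of_subset
      · intro x hx
        obtain ⟨i, -, hxi⟩ := Set.mem_iUnion₂.mp hx
        obtain ⟨w, hw, a, haa, rfl⟩ := Set.mem_mul.mp hxi
        have hw1 : w = 1 := by simpa using hw
        subst hw1
        rw [one_mul]
        exact Set.mem_iUnion.mpr ⟨i, haa⟩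
      · intro x hx
        obtain ⟨i, hxi⟩ := Set.mem_iUnion.mp hx
        exact Set.mem_iUnion₂.mpr ⟨i, Finset.mem_univ i,
          ⟨1, by simp, x, hxi, one_mul x⟩⟩
    have hcov0 : (Set.univ \ ⋃ i ∈ (Finset.univ : Finset (Fin (k + 1))),
        (↑({1} : Finset G) : Set G) * A i) ∈ I := by
      rw [hcovU]
      simpa using hE
    obtain ⟨i, F, hF, heq⟩ := mainLemma hIdeal hTrans hProper hE A k
      Finset.univ (by simp) (fun _ => {1}) 1 (by simp) hcov0
    refine ⟨i, F, ?_, heq⟩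
    have := hF.trans (iter_bound k)
    simpa using this
  · have hS : (∅ : Set G) ∉ I := hE
    have hDelta : combDerivI I (A ⟨0, by omega⟩) = Set.univ := by
      apply Set.eq_univ_of_forall
      intro g
      simp only [combDerivI, Set.mem_setOf_eq]
      intro hc
      exact hE (hIdeal.1 ∅ _ (Set.empty_subset _) hc)
    refine ⟨⟨0, by omega⟩, {1}, by simpa using Nat.one_le_two_pow, ?_⟩
    rw [hDelta]
    apply Set.eq_of_subset_of_subset (Set.subset_univ _)
    intro x _
    exact ⟨1, by simp, x, trivial, one_mul x⟩
end
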